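/- Let L/K be a finite Galois extension of number fields and suppose 𝓞_L is locally free over 𝒜_{L/K}, i.e., for every nonzero prime 𝔭 of 𝓞_K the localization 𝓞_{L,𝔭} is a free module of rank 1 over 𝒜_{L/K,𝔭}. Then for every nonzero ideal I of 𝓞_K there exists β ∈ 𝓞_L such that 𝒜_{L/K}·β ⊆ 𝓞_L is an 𝓞_K-submodule of full rank whose quotient T = 𝓞_L/(𝒜_{L/K}·β) satisfies I + ann_{𝓞_K}(T) = 𝓞_K (equivalently, the 𝓞_K-module index [𝓞_L : 𝒜_{L/K}·β] is coprime to I). -/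

import Mathlib

noncomputable section

/-- The action of the group algebra `K[Gal(L/K)]` on `L`, by `K`-linear extension of the
Galois action. -/
noncomputable def galAct {K L : Type*} [Field K] [Field L] [Algebra K L]
    (x : MonoidAlgebra K (L ≃ₐ[K] L)) (a : L) : L :=
  Finsupp.sum x.coeff fun g c => algebraMap K L c * g a

/-- The associated order `𝒜_{L/K} = { x ∈ K[Gal(L/K)] | x·𝓞_L ⊆ 𝓞_L }`. -/
def assocOrder (K L : Type*) [Field K] [Field L] [Algebra K L] :
    Set (MonoidAlgebra K (L ≃ₐ[K] L)) :=
  { x | ∀ a : L, IsIntegral ℤ a → IsIntegral ℤ (galAct x a) }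

/-- The localization `𝓞_{L,𝔭}` of `𝓞_L` at a prime `𝔭` of `𝓞_K`, as a subset of `L`. -/
def locO (K L : Type*) [Field K] [Field L] [Algebra K L]
    (P : Ideal (integralClosure ℤ K)) : Set L :=
  {y | ∃ s : integralClosure ℤ K, s ∉ P ∧ IsIntegral ℤ (algebraMap K L ↑s * y)}

/-- The localization `𝒜_{L/K,𝔭}` of the associated order at a prime `𝔭` of `𝓞_K`,
as a subset of `K[Gal(L/K)]`. -/
def locA (K L : Type*) [Field K] [Field L] [Algebra K L]
    (P : Ideal (integralClosure ℤ K)) : Set (MonoidAlgebra K (L ≃ₐ[K] L)) :=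
  {x | ∃ s : integralClosure ℤ K, s ∉ P ∧ (↑s : K) • x ∈ assocOrder K L}

/-- `𝓞_L` is locally free (of rank one) over `𝒜_{L/K}`:  for every nonzero prime `𝔭` of
`𝓞_K` the localization `𝓞_{L,𝔭}` is a free `𝒜_{L/K,𝔭}`-module of rank one. -/
def IsLocallyFree (K L : Type*) [Field K] [Field L] [Algebra K L] : Prop :=
  ∀ P : Ideal (integralClosure ℤ K), P ≠ ⊥ → P.IsPrime →
    ∃ β ∈ locO K L P,
      (∀ y ∈ locO K L P, ∃ x ∈ locA K L P, galAct x β = y) ∧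
      (∀ x ∈ locA K L P, galAct x β = 0 → x = 0)

section Aux

variable {K L : Type*} [Field K] [Field L] [Algebra K L]

lemma galAct_zero (a : L) : galAct (0 : MonoidAlgebra K (L ≃ₐ[K] L)) a = 0 := by
  unfold galAct; rw [MonoidAlgebra.coeff_zero]; exact
  Finsupp.sum_zero_index

lemma galAct_add_left (x y : MonoidAlgebra K (L ≃ₐ[K] L)) (a : L) :
    galAct (x + y) a = galAct x a + galAct y a := by
  unfold galAct; rw [MonoidAlgebra.coeff_add]; exact
  Finsupp.sum_add_index' (fun g => by simp) (fun g c₁ c₂ => by rw [map_add, add_mul])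

lemma galAct_smul_left (c : K) (x : MonoidAlgebra K (L ≃ₐ[K] L)) (a : L) :
    galAct (c • x) a = algebraMap K L c * galAct x a := by
  unfold galAct
  rw [MonoidAlgebra.coeff_smul, Finsupp.sum_smul_index' (fun g => by simp), Finsupp.mul_sum]
  exact Finsupp.sum_congr fun g _ => by rw [smul_eq_mul, map_mul, mul_assoc]

lemma galAct_add_right (x : MonoidAlgebra K (L ≃ₐ[K] L)) (a b : L) :
    galAct x (a + b) = galAct x a + galAct x b := by
  unfold galAct
  rw [← Finsupp.sum_add]
  exact Finsupp.sum_congr fun g _ => by rw [map_add, mul_add]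

lemma galAct_mul_algebraMap (x : MonoidAlgebra K (L ≃ₐ[K] L)) (c : K) (a : L) :
    galAct x (algebraMap K L c * a) = algebraMap K L c * galAct x a := by
  unfold galAct
  rw [Finsupp.mul_sum]
  exact Finsupp.sum_congr fun g _ => by
    rw [map_mul, AlgEquiv.commutes, mul_left_comm]

lemma galAct_sub_right (x : MonoidAlgebra K (L ≃ₐ[K] L)) (a b : L) :
    galAct x (a - b) = galAct x a - galAct x b := by
  have := galAct_add_right x (a - b) b
  rw [sub_add_cancel] at this
  rw [this]; ring

lemma ic_smul_def (r : integralClosure ℤ K) (y : L) :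
    r • y = algebraMap K L ↑r * y := by
  rw [Algebra.smul_def, IsScalarTower.algebraMap_apply (integralClosure ℤ K) K L]; rfl

lemma ic_isIntegral (r : integralClosure ℤ K) : IsIntegral ℤ ((r : K)) := r.2

lemma ic_map_isIntegral (r : integralClosure ℤ K) :
    IsIntegral ℤ (algebraMap K L (r : K)) :=
  (ic_isIntegral r).map (IsScalarTower.toAlgHom ℤ K L)

lemma zero_mem_assocOrder : (0 : MonoidAlgebra K (L ≃ₐ[K] L)) ∈ assocOrder K L :=
  fun a _ => by rw [galAct_zero]; exact isIntegral_zero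

lemma add_mem_assocOrder {x y : MonoidAlgebra K (L ≃ₐ[K] L)}
    (hx : x ∈ assocOrder K L) (hy : y ∈ assocOrder K L) : x + y ∈ assocOrder K L :=
  fun a ha => by rw [galAct_add_left]; exact (hx a ha).add (hy a ha)

lemma smul_mem_assocOrder (r : integralClosure ℤ K) {x : MonoidAlgebra K (L ≃ₐ[K] L)}
    (hx : x ∈ assocOrder K L) : ((r : K)) • x ∈ assocOrder K L :=
  fun a ha => by rw [galAct_smul_left]; exact (ic_map_isIntegral r).mul (hx a ha)

/-- `𝓞_L` as a module over `𝓞_K`. -/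
def OLsub (K L : Type*) [Field K] [Field L] [Algebra K L] :
    Submodule (integralClosure ℤ K) L where
  carrier := {y | IsIntegral ℤ y}
  add_mem' := IsIntegral.add
  zero_mem' := isIntegral_zero
  smul_mem' := fun r y hy => by
    rw [Set.mem_setOf_eq, ic_smul_def]
    exact (ic_map_isIntegral r).mul hy

lemma mem_OLsub {y : L} : y ∈ OLsub K L ↔ IsIntegral ℤ y := Iff.rfl

/-- `𝒜_{L/K}·β` as a module over `𝓞_K`. -/
def NS (K : Type*) {L : Type*} [Field K] [Field L] [Algebra K L] (β : L) :
    Submodule (integralClosure ℤ K) L where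
  carrier := {y | ∃ x ∈ assocOrder K L, galAct x β = y}
  add_mem' := fun {y₁ y₂} h₁ h₂ => by
    obtain ⟨x₁, hx₁, e₁⟩ := h₁
    obtain ⟨x₂, hx₂, e₂⟩ := h₂
    exact ⟨x₁ + x₂, add_mem_assocOrder hx₁ hx₂, by rw [galAct_add_left, e₁, e₂]⟩
  zero_mem' := ⟨0, zero_mem_assocOrder, galAct_zero β⟩
  smul_mem' := fun r y hy => by
    obtain ⟨x, hx, e⟩ := hy
    exact ⟨((r : K)) • x, smul_mem_assocOrder r hx,
      by rw [galAct_smul_left, e, ← ic_smul_def]⟩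

lemma mem_NS {β y : L} : y ∈ NS K β ↔ ∃ x ∈ assocOrder K L, galAct x β = y := Iff.rfl

/-- `galAct x` as an `𝓞_K`-linear map. -/
def galActL (x : MonoidAlgebra K (L ≃ₐ[K] L)) : L →ₗ[integralClosure ℤ K] L where
  toFun := galAct x
  map_add' := galAct_add_right x
  map_smul' := fun r a => by
    simp only [RingHom.id_apply]
    rw [ic_smul_def, ic_smul_def, galAct_mul_algebraMap]

lemma galActL_maps {x : MonoidAlgebra K (L ≃ₐ[K] L)} (hx : x ∈ assocOrder K L) :
    Submodule.map (galActL x) (OLsub K L) ≤ OLsub K L := by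
  rintro _ ⟨y, hy, rfl⟩
  exact hx y hy

lemma galActL_smul_maps {x : MonoidAlgebra K (L ≃ₐ[K] L)} (hx : x ∈ assocOrder K L)
    (P : Ideal (integralClosure ℤ K)) :
    Submodule.map (galActL x) (P • OLsub K L) ≤ P • OLsub K L := by
  rw [Submodule.map_smul'']
  exact Submodule.smul_mono le_rfl (galActL_maps hx)

end Aux
section Key

variable {K L : Type*} [Field K] [Field L] [Algebra K L]

set_option maxHeartbeats 1000000 in
lemma keylocal [NumberField K] (hlf : IsLocallyFree K L)
    (P : Ideal (integralClosure ℤ K)) (hP : P.IsPrime) (hPb : P ≠ ⊥) :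
    ∃ b : L, IsIntegral ℤ b ∧ ∀ y : L, IsIntegral ℤ y → y ∈ NS K b ⊔ P • OLsub K L := by
  haveI hded : IsDedekindDomain (integralClosure ℤ K) :=
    IsIntegralClosure.isDedekindDomain ℤ ℚ K _
  obtain ⟨β', hβ'O, hsurj, -⟩ := hlf P hPb hP
  obtain ⟨s, hsP, hsint⟩ := hβ'O
  set b : L := algebraMap K L ↑s * β' with hb
  refine ⟨b, hsint, fun y hy => ?_⟩
  have hyO : y ∈ locO K L P := ⟨1, by
      simpa using (Ideal.ne_top_iff_one P).mp hP.ne_top, by simpa using hy⟩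
  obtain ⟨x, hxA, hxe⟩ := hsurj y hyO
  obtain ⟨u, huP, hux⟩ := hxA
  have hcalc : galAct (((u : K)) • x) b = (u * s) • y := by
    rw [galAct_smul_left, hb, galAct_mul_algebraMap, hxe, ic_smul_def,
      MulMemClass.coe_mul, map_mul, mul_assoc]
  have htP : u * s ∉ P := fun h => by
    rcases hP.mem_or_mem h with h' | h' <;> [exact huP h'; exact hsP h']
  have h1 : (u * s) • y ∈ NS K b := ⟨_, hux, hcalc⟩
  obtain ⟨a, p, hpP, ha⟩ := (hP.isMaximal hPb).exists_inv htP
  refine Submodule.mem_sup.mpr ⟨a • ((u * s) • y), Submodule.smul_mem _ a h1,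
    p • y, Submodule.smul_mem_smul hpP hy, ?_⟩
  rw [smul_smul, ← add_smul, ha, one_smul]

end Key

set_option maxHeartbeats 2000000 in
set_option synthInstance.maxHeartbeats 1000000 in
theorem stmt6 (K L : Type*) [Field K] [Field L] [Algebra K L]
    [NumberField K] [NumberField L] [FiniteDimensional K L] [IsGalois K L]
    (hlf : IsLocallyFree K L) :
    ∀ I : Ideal (integralClosure ℤ K), I ≠ ⊥ →
      ∃ β : L, IsIntegral ℤ β ∧
        Submodule.span K {y : L | ∃ x ∈ assocOrder K L, galAct x β = y} = ⊤ ∧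
        ∃ i ∈ I, ∃ j : integralClosure ℤ K,
          (∀ y : L, IsIntegral ℤ y →
            ∃ x ∈ assocOrder K L, galAct x β = algebraMap K L ↑j * y) ∧
          i + j = 1 := by
  intro I hI
  classical
  haveI hded : IsDedekindDomain (integralClosure ℤ K) :=
    IsIntegralClosure.isDedekindDomain ℤ ℚ K _
  -- 𝓞_L is finitely generated over 𝓞_K
  have hOLfg : (OLsub K L).FG := by
    haveI : IsNoetherian ℤ (integralClosure ℤ L) := IsIntegralClosure.isNoetherian ℤ ℚ L _
    obtain ⟨s, hs⟩ := IsNoetherian.noetherian (⊤ : Submodule ℤ (integralClosure ℤ L))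
    refine Submodule.fg_def.mpr ⟨(Subtype.val : integralClosure ℤ L → L) '' (s : Set (integralClosure ℤ L)), Set.Finite.image Subtype.val (s : Set (integralClosure ℤ L)).toFinite, le_antisymm ?_ ?_⟩
    · refine Submodule.span_le.mpr ?_
      rintro _ ⟨c, _, rfl⟩
      exact c.2
    · intro y hy
      have h1 : (⟨y, hy⟩ : integralClosure ℤ L) ∈ (⊤ : Submodule ℤ (integralClosure ℤ L)) :=
        Submodule.mem_top
      rw [← hs] at h1
      have h2 := Submodule.mem_map_of_mem
        (f := (Subalgebra.val (integralClosure ℤ L)).toLinearMap) h1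
      rw [Submodule.map_span] at h2
      exact Submodule.span_le_restrictScalars ℤ (integralClosure ℤ K) _ h2
  -- an auxiliary nonzero proper prime
  have hnf : ¬IsField (integralClosure ℤ K) := NumberField.RingOfIntegers.not_isField K
  obtain ⟨P₀, hP₀b, hP₀p⟩ := Ring.not_isField_iff_exists_prime.mp hnf
  set I' := I ⊓ P₀ with hI'def
  have hI'b : I' ≠ ⊥ := by
    obtain ⟨a, haI, ha0⟩ := Submodule.exists_mem_ne_zero_of_ne_bot hI
    obtain ⟨c, hcP, hc0⟩ := Submodule.exists_mem_ne_zero_of_ne_bot hP₀b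
    exact Submodule.ne_bot_iff _ |>.mpr ⟨a * c,
      Submodule.mem_inf.mpr ⟨Ideal.mul_mem_right _ _ haI, Ideal.mul_mem_left _ _ hcP⟩,
      mul_ne_zero ha0 hc0⟩
  have hI'le : I' ≤ I := inf_le_left
  have hI'P₀ : I' ≤ P₀ := inf_le_right
  -- the finite set of primes containing I'
  set S := {P : Ideal (integralClosure ℤ K) | P.IsPrime ∧ I' ≤ P} with hSdef
  have hSb : ∀ P ∈ S, P ≠ ⊥ := by
    rintro P ⟨hp, hle⟩ rfl
    exact hI'b (le_bot_iff.mp hle)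
  have hSfin : S.Finite := by
    have h1 : S ⊆ (fun v => v.asIdeal) ''
        {v : IsDedekindDomain.HeightOneSpectrum (integralClosure ℤ K) | v.asIdeal ∣ I'} := by
      rintro P ⟨hp, hle⟩
      exact ⟨⟨P, hp, hSb P ⟨hp, hle⟩⟩, Ideal.dvd_iff_le.mpr hle, rfl⟩
    exact ((Ideal.finite_factors hI'b).image _).subset h1
  haveI := hSfin.to_subtype
  -- local generator data at each prime of S, together with CRT coefficients
  have htot : ∀ P : Ideal (integralClosure ℤ K), ∃ (b : L) (er : integralClosure ℤ K),
      P ∈ S → (IsIntegral ℤ b ∧ (∀ y : L, IsIntegral ℤ y → y ∈ NS K b ⊔ P • OLsub K L)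
        ∧ er - 1 ∈ P ∧ ∀ Q ∈ S, Q ≠ P → er ∈ Q) := by
    intro P
    by_cases hP : P ∈ S
    · obtain ⟨b, hbint, hbgen⟩ := keylocal hlf P hP.1 (hSb P hP)
      have hcop : Pairwise fun (Q Q' : ↥S) => IsCoprime (Q : Ideal (integralClosure ℤ K))
          (Q' : Ideal (integralClosure ℤ K)) := by
        intro Q Q' hne
        rw [Ideal.isCoprime_iff_sup_eq]
        exact Ideal.IsMaximal.coprime_of_ne (Q.2.1.isMaximal (hSb _ Q.2))
          (Q'.2.1.isMaximal (hSb _ Q'.2)) (fun h => hne (Subtype.ext h))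
      obtain ⟨er, her⟩ := Ideal.exists_forall_sub_mem_ideal hcop
        (fun Q : ↥S => if (Q : Ideal (integralClosure ℤ K)) = P then 1 else 0)
      refine ⟨b, er, fun _ => ⟨hbint, hbgen, ?_, ?_⟩⟩
      · have := her ⟨P, hP⟩
        rw [if_pos rfl] at this
        exact this
      · intro Q hQ hne
        have := her ⟨Q, hQ⟩
        rw [if_neg hne] at this
        simpa using this
    · exact ⟨0, 0, fun h => absurd h hP⟩
  choose b er hprops using htot
  set T := hSfin.toFinset with hTdef
  have hmemT : ∀ {P}, P ∈ T ↔ P ∈ S := fun {P} => hSfin.mem_toFinset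
  set β := ∑ P ∈ T, er P • b P with hβdef
  have hβO : β ∈ OLsub K L :=
    Submodule.sum_mem _ fun P hP =>
      Submodule.smul_mem _ _ ((hprops P (hmemT.mp hP)).1 : b P ∈ OLsub K L)
  have hβint : IsIntegral ℤ β := hβO
  -- β is congruent to the local generator modulo P·𝓞_L
  have hδ : ∀ P ∈ S, β - b P ∈ P • OLsub K L := by
    intro P hPS
    have hPT : P ∈ T := hmemT.mpr hPS
    rw [hβdef, ← Finset.add_sum_erase _ _ hPT]
    have h1 : er P • b P + (∑ Q ∈ T.erase P, er Q • b Q) - b P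
        = (er P - 1) • b P + ∑ Q ∈ T.erase P, er Q • b Q := by
      rw [sub_smul, one_smul]; ring
    rw [h1]
    refine Submodule.add_mem _
      (Submodule.smul_mem_smul (hprops P hPS).2.2.1 (hprops P hPS).1)
      (Submodule.sum_mem _ ?_)
    intro Q hQ
    obtain ⟨hne, hQT⟩ := Finset.mem_erase.mp hQ
    exact Submodule.smul_mem_smul
      ((hprops Q (hmemT.mp hQT)).2.2.2 P hPS (fun h => hne h.symm))
      ((hprops Q (hmemT.mp hQT)).1)
  -- β generates locally at each prime of S
  have hkey : ∀ P ∈ S, OLsub K L ≤ NS K β ⊔ P • OLsub K L := by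
    intro P hPS
    have hNSle : NS K (b P) ≤ NS K β ⊔ P • OLsub K L := by
      intro y hy
      obtain ⟨x, hxA, hxe⟩ := hy
      subst hxe
      have hmap : (galActL x) (β - b P) ∈ P • OLsub K L :=
        galActL_smul_maps hxA P (Submodule.mem_map_of_mem (hδ P hPS))
      refine Submodule.mem_sup.mpr ⟨galAct x β, ⟨x, hxA, rfl⟩,
        -((galActL x) (β - b P)), Submodule.neg_mem _ hmap, ?_⟩
      show galAct x β + -(galAct x (β - b P)) = galAct x (b P)
      rw [galAct_sub_right]; ring
    intro y hy
    rcases Submodule.mem_sup.mp ((hprops P hPS).2.1 y hy) with ⟨v, hv, w, hw, rfl⟩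
    exact Submodule.add_mem _ (hNSle hv) (Submodule.mem_sup_right hw)
  -- Nakayama: an annihilator element outside each prime of S
  have hann : ∀ P ∈ S, ∃ r : integralClosure ℤ K, r ∉ P ∧
      ∀ y : L, IsIntegral ℤ y → r • y ∈ NS K β := by
    intro P hPS
    set q := (NS K β).mkQ with hq
    have hNfg : ((OLsub K L).map q).FG := hOLfg.map q
    have hNle : (OLsub K L).map q ≤ P • (OLsub K L).map q := by
      have h2 := Submodule.map_mono (f := q) (hkey P hPS)
      rwa [Submodule.map_sup, Submodule.mkQ_map_self, bot_sup_eq,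
        Submodule.map_smul''] at h2
    obtain ⟨r, hr1, hr0⟩ :=
      Submodule.exists_sub_one_mem_and_smul_eq_zero_of_fg_of_le_smul P _ hNfg hNle
    refine ⟨r, fun hrP => ?_, fun y hy => ?_⟩
    · have h3 : (1 : integralClosure ℤ K) ∈ P := by
        have := P.sub_mem hrP hr1
        simpa using this
      exact hPS.1.ne_top ((Ideal.eq_top_iff_one P).mpr h3)
    · have h0 : r • q y = 0 := hr0 (q y) (Submodule.mem_map_of_mem hy)
      rw [← map_smul, hq, Submodule.mkQ_apply] at h0
      exact (Submodule.Quotient.mk_eq_zero _).mp h0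
  -- the annihilator ideal
  set J : Ideal (integralClosure ℤ K) :=
    { carrier := {r | ∀ y : L, IsIntegral ℤ y → r • y ∈ NS K β}
      add_mem' := fun h₁ h₂ y hy => by
        rw [add_smul]; exact Submodule.add_mem _ (h₁ y hy) (h₂ y hy)
      zero_mem' := fun y hy => by rw [zero_smul]; exact Submodule.zero_mem _
      smul_mem' := fun c r hr y hy => by
        rw [smul_eq_mul, mul_smul]; exact Submodule.smul_mem _ c (hr y hy) } with hJdef
  have hJsup : J ⊔ I' = ⊤ := by
    by_contra hne
    obtain ⟨M, hM, hle⟩ := Ideal.exists_le_maximal _ hne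
    have hMS : M ∈ S := ⟨hM.isPrime, le_trans le_sup_right hle⟩
    obtain ⟨r, hrM, hr⟩ := hann M hMS
    exact hrM (hle (le_sup_left (a := J) (b := I') (show r ∈ J from hr)))
  have h1mem : (1 : integralClosure ℤ K) ∈ J ⊔ I' := hJsup ▸ Submodule.mem_top
  obtain ⟨j', hj'J, i', hi'I', hji⟩ := Submodule.mem_sup.mp h1mem
  have hj'0 : j' ≠ 0 := by
    rintro rfl
    rw [zero_add] at hji
    subst hji
    exact hP₀p.ne_top ((Ideal.eq_top_iff_one P₀).mpr (hI'P₀ hi'I'))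
  have hj'prop : ∀ y : L, IsIntegral ℤ y → j' • y ∈ NS K β := hj'J
  -- the span is everything
  have hspan : Submodule.span K {y : L | ∃ x ∈ assocOrder K L, galAct x β = y} = ⊤ := by
    rw [eq_top_iff]
    rintro z -
    obtain ⟨m, hm0, hmint⟩ := exists_integral_multiples ℤ ℚ ({z} : Finset L)
    have h1 : IsIntegral ℤ (m • z) := hmint z (Finset.mem_singleton_self z)
    have h2 : j' • (m • z) ∈ NS K β := hj'prop _ h1
    have h3 : j' • (m • z) ∈ Submodule.span K
        {y : L | ∃ x ∈ assocOrder K L, galAct x β = y} := Submodule.subset_span h2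
    have h4 : j' • ((m : ℤ) • z) = (((j' : K)) * ((m : ℤ) : K)) • z := by
      rw [ic_smul_def, ← Algebra.smul_def, ← Int.cast_smul_eq_zsmul K m z, smul_smul]
    have h5 : (((j' : K)) * ((m : ℤ) : K)) ≠ 0 :=
      mul_ne_zero (fun h => hj'0 (by exact_mod_cast Subtype.ext h))
        (Int.cast_ne_zero.mpr hm0)
    have h6 := Submodule.smul_mem _ ((((j' : K)) * ((m : ℤ) : K))⁻¹) h3
    rw [h4, smul_smul, inv_mul_cancel₀ h5, one_smul] at h6
    exact h6
  refine ⟨β, hβint, hspan, i', hI'le hi'I', j', fun y hy => ?_, by rw [add_comm]; exact hji⟩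
  obtain ⟨x, hxA, hxe⟩ := hj'prop y hy
  exact ⟨x, hxA, by rw [hxe, ic_smul_def]⟩

end
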